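/- Let R be a commutative ring with total quotient ring T(R). The canonical ring homomorphism R[ε] → T(R)[ε] induced by the localization map R → T(R) exhibits T(R)[ε] as the total quotient ring of R[ε]; that is, T(R)[ε] is the localization of R[ε] at the multiplicative set of non-zerodivisors of R[ε] (the map is injective, sends every non-zerodivisor of R[ε] to a unit, and every element of T(R)[ε] is a quotient of an element of R[ε] by a non-zerodivisor of R[ε]). -/

import Mathlib

open TrivSqZeroExt

section Aux
variable (R : Type*) [CommRing R]

noncomputable def dnMapAux : DualNumber R →+* DualNumber (FractionRing R) where
  toFun z := ⟨algebraMap R (FractionRing R) z.fst, algebraMap R (FractionRing R) z.snd⟩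
  map_one' := by ext <;> simp
  map_mul' x y := by
    ext <;> simp [smul_eq_mul, MulOpposite.smul_eq_mul_unop, mul_comm]
    · rfl
    · erw [snd_mul]
      simp [TrivSqZeroExt.fst, TrivSqZeroExt.snd, smul_eq_mul, MulOpposite.smul_eq_mul_unop, mul_comm]
  map_zero' := by ext <;> simp
  map_add' x y := by ext <;> simp <;> rfl

@[simp] theorem dnMapAux_fst (z : DualNumber R) :
    (dnMapAux R z).fst = algebraMap R (FractionRing R) z.fst := rfl
@[simp] theorem dnMapAux_snd (z : DualNumber R) :
    (dnMapAux R z).snd = algebraMap R (FractionRing R) z.snd := rfl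

theorem fst_mem_nzd (z : DualNumber R) (hz : z ∈ nonZeroDivisors (DualNumber R)) :
    z.fst ∈ nonZeroDivisors R := by
  rw [mem_nonZeroDivisors_iff_right]
  intro a ha
  have h0 : (inr a : DualNumber R) * z = 0 := by
    ext <;> simp [mul_comm, ha]
  have := mem_nonZeroDivisors_iff_right.mp hz _ h0
  simpa [TrivSqZeroExt.ext_iff] using this

theorem inl_mem_nzd (c : R) (hc : c ∈ nonZeroDivisors R) :
    (inl c : DualNumber R) ∈ nonZeroDivisors (DualNumber R) := by
  rw [mem_nonZeroDivisors_iff_right]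
  intro w hw
  rw [TrivSqZeroExt.ext_iff] at hw ⊢
  simp only [fst_mul, snd_mul, fst_inl, snd_inl, fst_zero, snd_zero] at hw ⊢
  obtain ⟨h1, h2⟩ := hw
  simp only [smul_eq_mul, smul_zero, add_zero, MulOpposite.smul_eq_mul_unop,
    MulOpposite.unop_op] at h1 h2
  constructor
  · exact mem_nonZeroDivisors_iff_right.mp hc _ (by rw [mul_comm]; simpa [mul_comm] using h1)
  · exact mem_nonZeroDivisors_iff_right.mp hc _ (by rw [mul_comm]; simpa [mul_comm] using h2)
end Aux

set_option synthInstance.maxHeartbeats 800000 in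
/-- The total quotient ring of the ring of dual numbers `R[ε]` is
`T(R)[ε]`: the canonical ring homomorphism `R[ε] → T(R)[ε]` (induced coordinatewise by
the localization map `R → T(R)`) is injective, sends every non-zerodivisor of `R[ε]` to
a unit, and every element of `T(R)[ε]` can be written as a quotient of an element of
`R[ε]` by a non-zerodivisor of `R[ε]`. -/
theorem dualNumber_totalQuotientRing (R : Type*) [CommRing R] :
    ∃ φ : DualNumber R →+* DualNumber (FractionRing R),
      (∀ x y : R,
        φ (inl x + inr y) =
          inl (algebraMap R (FractionRing R) x) + inr (algebraMap R (FractionRing R) y)) ∧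
      Function.Injective φ ∧
      (∀ z ∈ nonZeroDivisors (DualNumber R), IsUnit (φ z)) ∧
      (∀ w : DualNumber (FractionRing R),
        ∃ z : DualNumber R, ∃ u ∈ nonZeroDivisors (DualNumber R), w * φ u = φ z) := by
  have hinj : Function.Injective (algebraMap R (FractionRing R)) :=
    IsFractionRing.injective R (FractionRing R)
  refine ⟨dnMapAux R, ?_, ?_, ?_, ?_⟩
  · intro x y
    ext
    · simp only [dnMapAux_fst, fst_add, fst_inl, fst_inr, add_zero, map_add, map_zero]
    · simp only [dnMapAux_snd, snd_add, snd_inl, snd_inr, zero_add, map_add, map_zero]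
  · intro a b hab
    rw [TrivSqZeroExt.ext_iff] at hab ⊢
    exact ⟨hinj hab.1, hinj hab.2⟩
  · intro z hz
    rw [isUnit_iff_isUnit_fst, dnMapAux_fst]
    exact IsLocalization.map_units (FractionRing R) ⟨z.fst, fst_mem_nzd R z hz⟩
  · intro w
    obtain ⟨⟨r, s⟩, hr⟩ := IsLocalization.surj (nonZeroDivisors R) w.fst
    obtain ⟨⟨p, q⟩, hp⟩ := IsLocalization.surj (nonZeroDivisors R) w.snd
    refine ⟨inl (r * (q : R)) + inr (p * (s : R)), inl ((s : R) * (q : R)),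
      inl_mem_nzd R _ (mul_mem s.2 q.2), ?_⟩
    simp only [Submonoid.coe_mul] at hr hp ⊢
    ext
    · simp only [fst_mul, dnMapAux_fst, fst_inl, fst_add, fst_inr, add_zero, map_add,
        map_mul, map_zero]
      rw [← mul_assoc, hr]
    · simp only [snd_mul, dnMapAux_snd, dnMapAux_fst, fst_inl, snd_inl, snd_add, snd_inr,
        zero_add, smul_zero, add_zero, map_zero, MulOpposite.smul_eq_mul_unop,
        MulOpposite.unop_op, map_mul, map_add, smul_eq_mul]
      rw [mul_comm ((algebraMap R (FractionRing R)) s), ← mul_assoc, hp]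
      ring
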